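/- Let (x_j) be a frame in an infinite-dimensional Hilbert space H and E a finite-dimensional subspace. Then for every δ < 1 there exists an index j with dist(x_j/‖x_j‖, E) ≥ δ. -/

import Mathlib

open scoped RealInnerProductSpace


lemma aux_exists_orthonormal {H : Type*} [NormedAddCommGroup H] [InnerProductSpace ℝ H]
    [CompleteSpace H] (hinf : ¬ FiniteDimensional ℝ H)
    (E : Submodule ℝ H) (hE : FiniteDimensional ℝ E) (N : ℕ) :
    ∃ v : Fin N → H, Orthonormal ℝ v ∧ ∀ k, v k ∈ Eᗮ := by
  haveI : CompleteSpace E := FiniteDimensional.complete ℝ E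
  obtain ⟨w, b, hb⟩ := exists_hilbertBasis ℝ (Eᗮ : Submodule ℝ H)
  have hwinf : w.Infinite := by
    intro hwfin
    apply hinf
    haveI : FiniteDimensional ℝ (Eᗮ : Submodule ℝ H) := by
      have hd := b.dense_span
      rw [hb, Subtype.range_coe] at hd
      haveI : FiniteDimensional ℝ (Submodule.span ℝ w) :=
        FiniteDimensional.span_of_finite ℝ hwfin
      have hclosed : IsClosed ((Submodule.span ℝ w : Submodule ℝ (Eᗮ : Submodule ℝ H)) :
          Set (Eᗮ : Submodule ℝ H)) := Submodule.closed_of_finiteDimensional _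
      rw [hclosed.submodule_topologicalClosure_eq] at hd
      exact Module.Finite.equiv (LinearEquiv.ofTop _ hd)
    have hsup : E ⊔ Eᗮ = ⊤ := Submodule.sup_orthogonal_of_hasOrthogonalProjection
    haveI : FiniteDimensional ℝ (E ⊔ Eᗮ : Submodule ℝ H) := Submodule.finiteDimensional_sup E Eᗮ
    rw [hsup] at this
    exact Module.Finite.equiv (Submodule.topEquiv)
  haveI : Infinite w := hwinf.to_subtype
  let f : Fin N ↪ w := (Fin.valEmbedding).trans (Infinite.natEmbedding w)
  have hon : Orthonormal ℝ (fun k : Fin N => ((f k : (Eᗮ : Submodule ℝ H)))) := by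
    have h := b.orthonormal.comp f f.injective
    rw [hb] at h
    exact h
  refine ⟨fun k => ((f k : (Eᗮ : Submodule ℝ H)) : H), ?_, fun k => (f k : (Eᗮ : Submodule ℝ H)).2⟩
  rw [orthonormal_iff_ite] at hon ⊢
  intro i j
  rw [← Submodule.coe_inner]
  exact hon i j

lemma aux_parseval {V : Type*} [NormedAddCommGroup V] [InnerProductSpace ℝ V]
    {ι : Type*} [Fintype ι] (e : OrthonormalBasis ι ℝ V) (v : V) :
    ‖v‖ ^ 2 = ∑ i, ⟪e i, v⟫ ^ 2 := by
  rw [← real_inner_self_eq_norm_sq]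
  conv_lhs => rw [← e.sum_repr' v]
  rw [e.orthonormal.inner_sum]
  simp [sq]

/-- Let `(x j)` be a frame in an infinite-dimensional Hilbert space `H` (all `x j ≠ 0`) and
`E` a finite-dimensional subspace.  Then for every `δ < 1` there is an index `j` with
`dist(x j / ‖x j‖, E) ≥ δ`. -/
theorem frame_normalized_exists_far_from_finite_dim
    {H : Type*} [NormedAddCommGroup H] [InnerProductSpace ℝ H] [CompleteSpace H]
    (hinf : ¬ FiniteDimensional ℝ H)
    (x : ℕ → H) (A B : ℝ) (hA : 0 < A) (hAB : A ≤ B)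
    (hframe : ∀ v : H,
      A * ‖v‖ ^ 2 ≤ ∑' j, ⟪v, x j⟫ ^ 2 ∧ ∑' j, ⟪v, x j⟫ ^ 2 ≤ B * ‖v‖ ^ 2)
    (hx : ∀ j, x j ≠ 0)
    (E : Submodule ℝ H) (hE : FiniteDimensional ℝ E) :
    ∀ δ : ℝ, δ < 1 → ∃ j, δ ≤ Metric.infDist (‖x j‖⁻¹ • x j) (E : Set H) := by
  intro δ hδ1
  by_contra hcon
  push_neg at hcon
  have hδ0 : 0 < δ := lt_of_le_of_lt Metric.infDist_nonneg (hcon 0)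
  haveI : CompleteSpace E := FiniteDimensional.complete ℝ E
  set d := Module.finrank ℝ E with hd
  let e := stdOrthonormalBasis ℝ E
  set Q : H → H := fun z => ((E.orthogonalProjectionOnto z : E) : H) with hQ
  set y : ℕ → H := fun j => x j - Q (x j) with hy
  have hyE : ∀ j, y j ∈ Eᗮ := fun j => E.sub_starProjection_mem_orthogonal (x j)
  have hQE : ∀ z, Q z ∈ E := fun z => SetLike.coe_mem _
  -- summability
  have hsum : ∀ v : H, Summable (fun j => ⟪v, x j⟫ ^ 2) := by
    intro v
    rcases eq_or_ne v 0 with rfl | hv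
    · simpa [inner_zero_left] using summable_zero
    · by_contra hs
      have h0 := tsum_eq_zero_of_not_summable hs
      have h1 := (hframe v).1
      rw [h0] at h1
      have h2 : 0 < A * ‖v‖ ^ 2 := by
        have := norm_pos_iff.mpr hv
        positivity
      linarith
  set C := δ ^ 2 / (1 - δ ^ 2) with hC
  have hδ2 : 0 < 1 - δ ^ 2 := by nlinarith
  have hCpos : 0 < C := by positivity
  have hCmul : C * (1 - δ ^ 2) = δ ^ 2 := div_mul_cancel₀ _ (ne_of_gt hδ2)
  -- Pythagoras helper
  have pyth : ∀ (a b : H), ⟪a, b⟫ = 0 → ‖a + b‖ ^ 2 = ‖a‖ ^ 2 + ‖b‖ ^ 2 := by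
    intro a b hab
    rw [norm_add_sq_real, hab]; ring
  -- key pointwise bound
  have key : ∀ j, ‖y j‖ ^ 2 ≤ C * ‖Q (x j)‖ ^ 2 := by
    intro j
    set n := ‖x j‖ with hn
    have hnpos : 0 < n := norm_pos_iff.mpr (hx j)
    obtain ⟨p, hpE, hp⟩ := (Metric.infDist_lt_iff ⟨0, E.zero_mem⟩).1 (hcon j)
    rw [dist_eq_norm] at hp
    -- minimality of y j among x j - q, q ∈ E
    have hmin : ∀ q ∈ E, ‖y j‖ ^ 2 ≤ ‖x j - q‖ ^ 2 := by
      intro q hq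
      have horth : ⟪y j, Q (x j) - q⟫ = 0 :=
        (Submodule.mem_orthogonal' E (y j)).1 (hyE j) _ (E.sub_mem (hQE (x j)) hq)
      have hdecomp : x j - q = y j + (Q (x j) - q) := by simp only [hy]; abel
      rw [hdecomp, pyth _ _ horth]
      nlinarith [sq_nonneg ‖Q (x j) - q‖]
    have hscale : ‖x j - n • p‖ = n * ‖‖x j‖⁻¹ • x j - p‖ := by
      rw [← norm_smul_of_nonneg hnpos.le, smul_sub, smul_inv_smul₀ (ne_of_gt hnpos)]
    have h1 : ‖y j‖ ^ 2 < n ^ 2 * δ ^ 2 := by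
      have hm := hmin (n • p) (E.smul_mem n hpE)
      rw [hscale] at hm
      have ht0 : (0:ℝ) ≤ ‖‖x j‖⁻¹ • x j - p‖ := norm_nonneg _
      have ht2 : ‖‖x j‖⁻¹ • x j - p‖ ^ 2 < δ ^ 2 := by nlinarith
      nlinarith [mul_pos hnpos hnpos]
    have h2 : n ^ 2 = ‖y j‖ ^ 2 + ‖Q (x j)‖ ^ 2 := by
      have horth : ⟪y j, Q (x j)⟫ = 0 :=
        (Submodule.mem_orthogonal' E (y j)).1 (hyE j) _ (hQE (x j))
      have hxeq : x j = y j + Q (x j) := by simp only [hy]; abel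
      calc n ^ 2 = ‖y j + Q (x j)‖ ^ 2 := by rw [hn, ← hxeq]
        _ = ‖y j‖ ^ 2 + ‖Q (x j)‖ ^ 2 := pyth _ _ horth
    nlinarith [sq_nonneg n, mul_pos hnpos hnpos]
  -- Parseval for the projections
  have parseval : ∀ j, ‖Q (x j)‖ ^ 2 = ∑ i, ⟪((e i : E) : H), x j⟫ ^ 2 := by
    intro j
    have h0 : ‖Q (x j)‖ = ‖E.orthogonalProjectionOnto (x j)‖ := rfl
    rw [h0, aux_parseval e]
    refine Finset.sum_congr rfl fun i _ => ?_
    congr 1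
    rw [Submodule.coe_inner]
    have hz : ⟪((e i : E) : H), y j⟫ = 0 :=
      Submodule.mem_orthogonal E (y j) |>.mp (hyE j) _ (SetLike.coe_mem _)
    simp only [hy, inner_sub_right] at hz
    linarith
  have hQsum : Summable (fun j => ‖Q (x j)‖ ^ 2) := by
    simp_rw [parseval]
    exact summable_sum (fun i _ => hsum _)
  have hQtsum : ∑' j, ‖Q (x j)‖ ^ 2 ≤ d * B := by
    calc ∑' j, ‖Q (x j)‖ ^ 2 = ∑' j, ∑ i, ⟪((e i : E) : H), x j⟫ ^ 2 := by
          simp_rw [parseval]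
      _ = ∑ i, ∑' j, ⟪((e i : E) : H), x j⟫ ^ 2 := Summable.tsum_finsetSum (fun i _ => hsum _)
      _ ≤ ∑ i : Fin d, B := by
          refine Finset.sum_le_sum fun i _ => ?_
          have := (hframe ((e i : E) : H)).2
          have hnorm : ‖((e i : E) : H)‖ = 1 := by
            rw [← Submodule.coe_norm]; exact e.orthonormal.1 i
          rwa [hnorm, one_pow, mul_one] at this
      _ = d * B := by simp [Finset.sum_const, mul_comm]
  -- choose N
  obtain ⟨N, hN⟩ := exists_nat_gt (C * (d * B) / A)
  have hNA : C * (d * B) < N * A := (div_lt_iff₀ hA).1 hN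
  obtain ⟨v, hvon, hvE⟩ := aux_exists_orthonormal hinf E hE N
  have hA_le : ∀ k : Fin N, A ≤ ∑' j, ⟪v k, x j⟫ ^ 2 := by
    intro k
    have := (hframe (v k)).1
    rwa [hvon.1 k, one_pow, mul_one] at this
  have pointwise : ∀ j, ∑ k : Fin N, ⟪v k, x j⟫ ^ 2 ≤ C * ‖Q (x j)‖ ^ 2 := by
    intro j
    have h1 : ∀ k, ⟪v k, x j⟫ = ⟪v k, y j⟫ := by
      intro k
      have hz : ⟪v k, Q (x j)⟫ = 0 :=
        (Submodule.mem_orthogonal' E (v k)).1 (hvE k) _ (hQE (x j))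
      simp only [hy, inner_sub_right, hz, sub_zero]
    have hbessel := hvon.sum_inner_products_le (y j) (s := Finset.univ)
    simp_rw [Real.norm_eq_abs, sq_abs] at hbessel
    calc ∑ k : Fin N, ⟪v k, x j⟫ ^ 2 = ∑ k : Fin N, ⟪v k, y j⟫ ^ 2 := by
          simp_rw [h1]
      _ ≤ ‖y j‖ ^ 2 := hbessel
      _ ≤ C * ‖Q (x j)‖ ^ 2 := key j
  have hfinal : (N : ℝ) * A ≤ C * (d * B) := by
    calc (N : ℝ) * A = ∑ _k : Fin N, A := by simp [Finset.sum_const, mul_comm]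
      _ ≤ ∑ k : Fin N, ∑' j, ⟪v k, x j⟫ ^ 2 := Finset.sum_le_sum fun k _ => hA_le k
      _ = ∑' j, ∑ k : Fin N, ⟪v k, x j⟫ ^ 2 := (Summable.tsum_finsetSum (fun k _ => hsum _)).symm
      _ ≤ ∑' j, C * ‖Q (x j)‖ ^ 2 :=
          Summable.tsum_le_tsum pointwise (summable_sum (fun k _ => hsum _)) (hQsum.mul_left C)
      _ = C * ∑' j, ‖Q (x j)‖ ^ 2 := tsum_mul_left
      _ ≤ C * (d * B) := by
          exact mul_le_mul_of_nonneg_left hQtsum hCpos.le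
  linarith
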